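/- Suppose F(·,x,a) has bounded variation along x̄ uniformly over A, let δ̄>0 satisfy η^δ̄(T) < ∞, and assume (C1) and (C2). Then there exists a countable set 𝒜 ⊂ (S,T) such that for every t ∈ (S,T)∖𝒜, lim_{t'→t} sup{ d_H(F(t',x,a), F(t,x,a)) : x ∈ x̄(t)+δ̄𝔹, a ∈ A } = 0. -/

import Mathlib

open Set Metric Filter MeasureTheory Pointwise
open scoped ENNReal Topology

noncomputable section

/-- Euclidean `n`-space `ℝⁿ`. -/
abbrev En (n : ℕ) : Type := EuclideanSpace ℝ (Fin n)

/-- A partition `{t₀ = S, t₁, …, t_N = t}` of the interval `[S, t]`. -/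
structure IntervalPartition (S t : ℝ) where
  N : ℕ
  pts : ℕ → ℝ
  hN : 0 < N
  first : pts 0 = S
  last : pts N = t
  mono : ∀ i, i < N → pts i < pts (i + 1)

/-- `diam(𝒯) ≤ ε` : every subinterval of the partition has length at most `ε`. -/
def IntervalPartition.diamLE {S t : ℝ} (P : IntervalPartition S t) (ε : ℝ) : Prop :=
  ∀ i, i < P.N → P.pts (i + 1) - P.pts i ≤ ε

/-- The sum `I^δ(𝒯) = Σᵢ sup { d_H(F(tᵢ₊₁,x,a), F(tᵢ,x,a)) :
x ∈ x̄([tᵢ,tᵢ₊₁]) + δ𝔹, a ∈ A }` for a multifunction `F` along `x̄`, uniformly over `A`. -/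
noncomputable def mvSum {n k : ℕ} (F : ℝ → En n → En k → Set (En n))
    (xbar : ℝ → En n) (A : Set (En k)) (δ : ℝ) {S t : ℝ} (P : IntervalPartition S t) : ℝ≥0∞ :=
  ∑ i ∈ Finset.range P.N,
    ⨆ x ∈ xbar '' Set.Icc (P.pts i) (P.pts (i + 1)) + Metric.closedBall (0 : En n) δ,
      ⨆ a ∈ A, EMetric.hausdorffEdist (F (P.pts (i + 1)) x a) (F (P.pts i) x a)

/-- The `(δ,ε)`-perturbed cumulative variation function `η^δ_ε(t)`:
the supremum of `I^δ(𝒯)` over partitions `𝒯` of `[S,t]` with `diam(𝒯) ≤ ε`.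
(For `t = S` there are no partitions and the value is `0`.) -/
noncomputable def mvEtaEps {n k : ℕ} (F : ℝ → En n → En k → Set (En n))
    (xbar : ℝ → En n) (A : Set (En k)) (δ ε : ℝ) (S t : ℝ) : ℝ≥0∞ :=
  ⨆ (P : IntervalPartition S t) (_ : P.diamLE ε), mvSum F xbar A δ P

/-- The `δ`-perturbed cumulative variation function `η^δ(t) = lim_{ε↓0} η^δ_ε(t)`
(the limit of the decreasing-in-`ε` family equals the infimum). -/
noncomputable def mvEtaDelta {n k : ℕ} (F : ℝ → En n → En k → Set (En n))
    (xbar : ℝ → En n) (A : Set (En k)) (δ : ℝ) (S t : ℝ) : ℝ≥0∞ :=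
  ⨅ (ε : ℝ) (_ : 0 < ε), mvEtaEps F xbar A δ ε S t

/-- The cumulative variation function `η(t) = lim_{δ↓0} η^δ(t)`. -/
noncomputable def mvEta {n k : ℕ} (F : ℝ → En n → En k → Set (En n))
    (xbar : ℝ → En n) (A : Set (En k)) (S t : ℝ) : ℝ≥0∞ :=
  ⨅ (δ : ℝ) (_ : 0 < δ), mvEtaDelta F xbar A δ S t

/-- `F(·,x,a)` has bounded variation along `x̄` uniformly over `A` : `η(T) < ∞`. -/
def HasBVAlongUniformly {n k : ℕ} (F : ℝ → En n → En k → Set (En n))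
    (xbar : ℝ → En n) (A : Set (En k)) (S T : ℝ) : Prop :=
  mvEta F xbar A S T < ⊤

/-- Hypothesis (C1): nonempty closed values, measurability in `t` (Castaing-type
characterization via distance functions), and uniform boundedness near `x̄`. -/
def HypC1 {n k : ℕ} (F : ℝ → En n → En k → Set (En n))
    (xbar : ℝ → En n) (A : Set (En k)) (S T δbar : ℝ) : Prop :=
  (∀ t ∈ Set.Icc S T, ∀ x : En n, ∀ a ∈ A, (F t x a).Nonempty ∧ IsClosed (F t x a)) ∧
  (∀ x : En n, ∀ a ∈ A, ∀ v : En n,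
      Measurable fun t : ℝ => EMetric.infEdist v (F t x a)) ∧
  (∃ c : ℝ, 0 < c ∧ ∀ t ∈ Set.Icc S T, ∀ x ∈ Metric.closedBall (xbar t) δbar, ∀ a ∈ A,
      F t x a ⊆ Metric.closedBall (0 : En n) c)

/-- Hypothesis (C2): uniform continuity of `(x,a) ↦ F(t,x,a)` near `x̄`,
with a modulus of continuity `γ`. -/
def HypC2 {n k : ℕ} (F : ℝ → En n → En k → Set (En n))
    (xbar : ℝ → En n) (A : Set (En k)) (S T δbar : ℝ) : Prop :=
  ∃ γ : ℝ → ℝ, (∀ s, 0 ≤ γ s) ∧ Tendsto γ (𝓝[>] (0 : ℝ)) (𝓝 0) ∧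
    ∀ t ∈ Set.Icc S T, ∀ x ∈ Metric.closedBall (xbar t) δbar,
      ∀ x' ∈ Metric.closedBall (xbar t) δbar, ∀ a ∈ A, ∀ a' ∈ A,
        F t x a ⊆ F t x' a' + Metric.closedBall (0 : En n) (γ (‖x - x'‖ + ‖a - a'‖))

/-- The Kuratowski upper limit of a family of sets along a filter `l`. -/
def kLimsup {α : Type*} [PseudoEMetricSpace α] (l : Filter ℝ) (G : ℝ → Set α) : Set α :=
  {v | ∀ ε : ℝ≥0∞, 0 < ε → ∃ᶠ s in l, EMetric.infEdist v (G s) < ε}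

/-- The Kuratowski lower limit of a family of sets along a filter `l`. -/
def kLiminf {α : Type*} [PseudoEMetricSpace α] (l : Filter ℝ) (G : ℝ → Set α) : Set α :=
  {v | Tendsto (fun s => EMetric.infEdist v (G s)) l (𝓝 0)}

/-- The set-valued limit along `l` exists: upper and lower Kuratowski limits coincide. -/
def KLimExists {α : Type*} [PseudoEMetricSpace α] (l : Filter ℝ) (G : ℝ → Set α) : Prop :=
  kLimsup l G = kLiminf l G

/-- The set-valued right limit `F(s̄⁺, x, a) = lim_{s ↓ s̄} F(s,x,a)` (with `s ∈ (s̄,T]`). -/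
def rightLim {n k : ℕ} (F : ℝ → En n → En k → Set (En n)) (T sbar : ℝ)
    (x : En n) (a : En k) : Set (En n) :=
  kLiminf (𝓝[Set.Ioc sbar T] sbar) fun s => F s x a

/-- The set-valued left limit `F(t̄⁻, x, a) = lim_{t ↑ t̄} F(t,x,a)` (with `t ∈ [S,t̄)`). -/
def leftLim {n k : ℕ} (F : ℝ → En n → En k → Set (En n)) (S tbar : ℝ)
    (x : En n) (a : En k) : Set (En n) :=
  kLiminf (𝓝[Set.Ico S tbar] tbar) fun s => F s x a



section Statement3Aux

open EMetric

variable {n k : ℕ}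

lemma IntervalPartition.pts_zero_lt {S t : ℝ} (P : IntervalPartition S t) :
    ∀ j, j ≤ P.N → 0 < j → P.pts 0 < P.pts j := by
  intro j
  induction j with
  | zero => intro _ h; exact absurd h (lt_irrefl 0)
  | succ m ih =>
    intro hle _
    have hm : m < P.N := by omega
    rcases Nat.eq_zero_or_pos m with h0 | hp
    · subst h0; exact P.mono 0 hm
    · exact (ih (by omega) hp).trans (P.mono m hm)

lemma IntervalPartition.S_lt {S t : ℝ} (P : IntervalPartition S t) : S < t := by
  have := P.pts_zero_lt P.N le_rfl P.hN
  rwa [P.first, P.last] at this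

instance {S : ℝ} : IsEmpty (IntervalPartition S S) :=
  ⟨fun P => lt_irrefl S P.S_lt⟩

/-- Extend a partition of `[S,s]` by one extra node `t`. -/
def IntervalPartition.extend {S s : ℝ} (P : IntervalPartition S s) (t : ℝ) (h : s < t) : IntervalPartition S t where
  N := P.N + 1
  pts := fun i => if i ≤ P.N then P.pts i else t
  hN := Nat.succ_pos _
  first := by simp [P.first]
  last := by simp
  mono := by
    intro i hi
    rcases Nat.lt_or_ge i P.N with hlt | hge
    · show (if i ≤ P.N then P.pts i else t) < (if i + 1 ≤ P.N then P.pts (i+1) else t)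
      rw [if_pos (le_of_lt hlt), if_pos (show i + 1 ≤ P.N from hlt)]
      exact P.mono i hlt
    · have hie : i = P.N := by omega
      subst hie
      show (if P.N ≤ P.N then P.pts P.N else t) < (if P.N + 1 ≤ P.N then P.pts (P.N+1) else t)
      rw [if_pos le_rfl, if_neg (Nat.not_succ_le_self P.N), P.last]
      exact h

lemma IntervalPartition.extend_pts_of_le {S s : ℝ} (P : IntervalPartition S s) (t : ℝ) (h : s < t)
    {i : ℕ} (hi : i ≤ P.N) : (P.extend t h).pts i = P.pts i := if_pos hi

lemma IntervalPartition.extend_pts_last {S s : ℝ} (P : IntervalPartition S s) (t : ℝ) (h : s < t) :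
    (P.extend t h).pts (P.N + 1) = t := if_neg (Nat.not_succ_le_self P.N)

/-- The one-interval partition. -/
def IntervalPartition.single (S t : ℝ) (h : S < t) : IntervalPartition S t where
  N := 1
  pts := fun i => if i = 0 then S else t
  hN := one_pos
  first := by simp
  last := by simp
  mono := by
    intro i hi
    have hi1 : i < 1 := hi
    have : i = 0 := by omega
    subst this
    simpa using h

/-- The uniform partition of `[s,t]` into `m` pieces. -/
def IntervalPartition.uniform (s t : ℝ) (h : s < t) (m : ℕ) (hm : 0 < m) : IntervalPartition s t where
  N := m
  pts := fun i => s + i * ((t - s) / m)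
  hN := hm
  first := by simp
  last := by
    have hm' : (m : ℝ) ≠ 0 := Nat.cast_ne_zero.2 hm.ne'
    field_simp
    ring
  mono := by
    intro i hi
    have hm' : (0 : ℝ) < m := Nat.cast_pos.2 hm
    have hd : 0 < (t - s) / m := div_pos (by linarith) hm'
    push_cast
    nlinarith

lemma IntervalPartition.uniform_gap (s t : ℝ) (h : s < t) (m : ℕ) (hm : 0 < m) (i : ℕ) :
    (IntervalPartition.uniform s t h m hm).pts (i + 1) - (IntervalPartition.uniform s t h m hm).pts i
      = (t - s) / m := by
  show (s + (↑(i+1) : ℝ) * ((t - s) / m)) - (s + i * ((t - s) / m)) = (t - s) / m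
  push_cast; ring

/-- The supremum of Hausdorff distances between `F t` and `F s` over the tube around
`x̄([s,t])` and `A`. -/
noncomputable def Gap (F : ℝ → En n → En k → Set (En n)) (xbar : ℝ → En n)
    (A : Set (En k)) (δ : ℝ) (s t : ℝ) : ℝ≥0∞ :=
  ⨆ x ∈ xbar '' Set.Icc s t + Metric.closedBall (0 : En n) δ,
    ⨆ a ∈ A, EMetric.hausdorffEdist (F t x a) (F s x a)

lemma mvSum_extend (F : ℝ → En n → En k → Set (En n)) (xbar : ℝ → En n)
    (A : Set (En k)) (δ : ℝ) {S s : ℝ} (P : IntervalPartition S s) (t : ℝ) (h : s < t) :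
    mvSum F xbar A δ (P.extend t h) = mvSum F xbar A δ P + Gap F xbar A δ s t := by
  have hN : (P.extend t h).N = P.N + 1 := rfl
  unfold mvSum
  rw [hN, Finset.sum_range_succ]
  congr 1
  · refine Finset.sum_congr rfl fun i hi => ?_
    have hi' : i < P.N := Finset.mem_range.1 hi
    rw [P.extend_pts_of_le t h (le_of_lt hi'), P.extend_pts_of_le t h hi']
  · rw [P.extend_pts_of_le t h le_rfl, P.extend_pts_last t h, P.last]
    rfl

lemma mvSum_single (F : ℝ → En n → En k → Set (En n)) (xbar : ℝ → En n)
    (A : Set (En k)) (δ : ℝ) {S t : ℝ} (h : S < t) :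
    mvSum F xbar A δ (IntervalPartition.single S t h) = Gap F xbar A δ S t := by
  unfold mvSum
  rw [show (IntervalPartition.single S t h).N = 1 from rfl, Finset.sum_range_one]
  rfl

end Statement3Aux

/-- Under bounded variation along `x̄` uniformly over `A`,
`η^δ̄(T) < ∞`, (C1) and (C2), there is a countable set `𝒜 ⊆ (S,T)` such that for
every `t ∈ (S,T) \ 𝒜`,
`sup{ d_H(F(t',x,a), F(t,x,a)) : x ∈ x̄(t)+δ̄𝔹, a ∈ A } → 0` as `t' → t` in `[S,T]`. -/
theorem statement3 {n k : ℕ} (F : ℝ → En n → En k → Set (En n))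
    (xbar : ℝ → En n) (A : Set (En k)) (S T : ℝ) (hST : S < T)
    (hA : IsCompact A) (hx : ContinuousOn xbar (Set.Icc S T))
    (hBV : HasBVAlongUniformly F xbar A S T)
    (δbar : ℝ) (hδbar : 0 < δbar) (hfin : mvEtaDelta F xbar A δbar S T < ⊤)
    (hC1 : HypC1 F xbar A S T δbar) (hC2 : HypC2 F xbar A S T δbar) :
    ∃ 𝒜 : Set ℝ, 𝒜.Countable ∧ 𝒜 ⊆ Set.Ioo S T ∧
      ∀ t ∈ Set.Ioo S T \ 𝒜,
        Tendsto
          (fun t' => ⨆ x ∈ Metric.closedBall (xbar t) δbar, ⨆ a ∈ A,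
            EMetric.hausdorffEdist (F t' x a) (F t x a))
          (𝓝[Set.Icc S T \ {t}] t) (𝓝 0) := by
  classical
  -- choose a mesh ε₀ with finite variation sup
  obtain ⟨ε₀, hε₀fin⟩ : ∃ ε₀ : ℝ, 0 < ε₀ ∧ mvEtaEps F xbar A δbar ε₀ S T < ⊤ := by
    rw [mvEtaDelta] at hfin
    obtain ⟨ε, hε⟩ := iInf_lt_iff.1 hfin
    obtain ⟨hεpos, hlt⟩ := iInf_lt_iff.1 hε
    exact ⟨ε, hεpos, hlt⟩
  obtain ⟨hε₀pos, hM⟩ := hε₀fin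
  set f : ℝ → ℝ≥0∞ := fun u => mvEtaEps F xbar A δbar ε₀ S u with hf
  -- f S = 0
  have hfS : f S = 0 := by
    simp [hf, mvEtaEps]
  -- key1: appending [s,t] to a good partition of [S,s]
  have key1 : ∀ {s t : ℝ}, s < t → t - s ≤ ε₀ → ∀ P : IntervalPartition S s, P.diamLE ε₀ →
      mvSum F xbar A δbar P + Gap F xbar A δbar s t ≤ f t := by
    intro s t hst hmesh P hP
    have hdiam : (P.extend t hst).diamLE ε₀ := by
      intro i hi
      have hi' : i < P.N + 1 := hi
      rcases Nat.lt_or_ge i P.N with hlt | hge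
      · rw [P.extend_pts_of_le t hst (le_of_lt hlt), P.extend_pts_of_le t hst hlt]
        exact hP i hlt
      · have : i = P.N := by omega
        subst this
        rw [P.extend_pts_of_le t hst le_rfl, P.extend_pts_last t hst, P.last]
        exact hmesh
    calc mvSum F xbar A δbar P + Gap F xbar A δbar s t
        = mvSum F xbar A δbar (P.extend t hst) := (mvSum_extend F xbar A δbar P t hst).symm
      _ ≤ f t := le_iSup₂_of_le (P.extend t hst) hdiam le_rfl
  -- key0: the one-interval partition of [S,t]
  have key0 : ∀ {t : ℝ}, S < t → t - S ≤ ε₀ → Gap F xbar A δbar S t ≤ f t := by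
    intro t hst hmesh
    have hdiam : (IntervalPartition.single S t hst).diamLE ε₀ := by
      intro i hi
      have hi1 : i < 1 := hi
      have : i = 0 := by omega
      subst this
      show (if (1:ℕ) = 0 then S else t) - (if (0:ℕ) = 0 then S else t) ≤ ε₀
      simpa using hmesh
    calc Gap F xbar A δbar S t = mvSum F xbar A δbar (IntervalPartition.single S t hst) :=
          (mvSum_single F xbar A δbar hst).symm
      _ ≤ f t := le_iSup₂_of_le (IntervalPartition.single S t hst) hdiam le_rfl
  -- local monotonicity
  have hlocal : ∀ {s t : ℝ}, S ≤ s → s ≤ t → t - s ≤ ε₀ → f s ≤ f t := by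
    intro s t hSs hst hmesh
    rcases eq_or_lt_of_le hst with rfl | hlt
    · exact le_rfl
    rcases eq_or_lt_of_le hSs with rfl | hSs'
    · rw [hfS]; exact zero_le
    refine iSup₂_le fun P hP => ?_
    exact le_trans le_self_add (key1 hlt hmesh P hP)
  -- chained monotonicity on [S,∞)
  have hchain : ∀ m : ℕ, ∀ s t : ℝ, S ≤ s → s ≤ t → t - s ≤ m * ε₀ → f s ≤ f t := by
    intro m
    induction m with
    | zero =>
      intro s t hSs hst hb
      have : s = t := by push_cast at hb; linarith
      rw [this]
    | succ m ih =>
      intro s t hSs hst hb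
      by_cases hsmall : t - s ≤ ε₀
      · exact hlocal hSs hst hsmall
      · push_neg at hsmall
        have h1 : f s ≤ f (t - ε₀) := by
          refine ih s (t - ε₀) hSs (by linarith) ?_
          push_cast at hb ⊢; linarith
        have h2 : f (t - ε₀) ≤ f t := hlocal (by linarith) (by linarith) (by linarith)
        exact h1.trans h2
  have hmono : ∀ s t : ℝ, S ≤ s → s ≤ t → f s ≤ f t := by
    intro s t hSs hst
    obtain ⟨m, hm⟩ := exists_nat_ge ((t - s) / ε₀)
    refine hchain m s t hSs hst ?_
    rw [div_le_iff₀ hε₀pos] at hm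
    linarith [hm]
  -- finiteness of f on [S,T]
  have hffin : ∀ u : ℝ, S ≤ u → u ≤ T → f u ≠ ⊤ :=
    fun u h1 h2 => ((hmono u T h1 h2).trans_lt hM).ne
  -- the bound lemma : Gap s t ≤ f t - f s
  have boundLem : ∀ {s t : ℝ}, S ≤ s → s < t → t ≤ T → t - s ≤ ε₀ →
      Gap F xbar A δbar s t ≤ f t - f s := by
    intro s t hSs hst htT hmesh
    rcases eq_or_lt_of_le hSs with rfl | hSs'
    · rw [hfS, tsub_zero]; exact key0 hst hmesh
    · -- there exists a good partition of [S,s]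
      obtain ⟨m, hm⟩ := exists_nat_gt ((s - S) / ε₀)
      have hmpos : 0 < m := by
        have h0 : (0:ℝ) < m := (div_pos (by linarith) hε₀pos).trans hm
        exact_mod_cast h0
      have hPu : (IntervalPartition.uniform S s hSs' m hmpos).diamLE ε₀ := by
        intro i hi
        rw [IntervalPartition.uniform_gap]
        rw [div_le_iff₀ (by exact_mod_cast hmpos : (0:ℝ) < m)]
        rw [div_lt_iff₀ hε₀pos] at hm
        linarith
      haveI : Nonempty {P : IntervalPartition S s // P.diamLE ε₀} :=
        ⟨⟨IntervalPartition.uniform S s hSs' m hmpos, hPu⟩⟩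
      have hfs : f s = ⨆ q : {P : IntervalPartition S s // P.diamLE ε₀}, mvSum F xbar A δbar q.1 := by
        rw [hf]; exact iSup_subtype'
      have hadd : f s + Gap F xbar A δbar s t ≤ f t := by
        rw [hfs, ENNReal.iSup_add]
        exact iSup_le fun q => key1 hst hmesh q.1 q.2
      exact (ENNReal.cancel_of_ne (hffin s hSs (le_of_lt (hst.trans_le htT)))).le_tsub_of_add_le_left hadd
  -- the global monotone function g
  set g : ℝ → ℝ≥0∞ := fun u => f (max S (min u T)) with hg
  have hgmono : Monotone g := by
    intro u v huv
    refine hmono _ _ (le_max_left _ _) ?_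
    exact max_le_max le_rfl (min_le_min huv le_rfl)
  have hgeq : ∀ u : ℝ, S ≤ u → u ≤ T → g u = f u := by
    intro u h1 h2
    rw [hg]
    simp only [min_eq_left h2, max_eq_right h1]
  refine ⟨{u | ¬ContinuousAt g u} ∩ Set.Ioo S T,
    (hgmono.countable_not_continuousAt).mono Set.inter_subset_left,
    Set.inter_subset_right, ?_⟩
  rintro t ⟨htIoo, htA⟩
  have hcont : ContinuousAt g t := by
    by_contra hc
    exact htA ⟨hc, htIoo⟩
  have htS : S < t := htIoo.1
  have htT : t < T := htIoo.2
  have hgt_ne : g t ≠ ⊤ := by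
    rw [hgeq t (le_of_lt htS) (le_of_lt htT)]
    exact hffin t (le_of_lt htS) (le_of_lt htT)
  -- the dominating function ψ
  have hmax : Tendsto (fun t' => g (max t t')) (𝓝[Set.Icc S T \ {t}] t) (𝓝 (g t)) := by
    have h1 : Tendsto (fun t' : ℝ => max t t') (𝓝 t) (𝓝 t) := by
      have := (tendsto_const_nhds (x := t) (f := 𝓝 t)).max tendsto_id
      simpa using this
    exact (hcont.tendsto.comp h1).mono_left nhdsWithin_le_nhds
  have hmin : Tendsto (fun t' => g (min t t')) (𝓝[Set.Icc S T \ {t}] t) (𝓝 (g t)) := by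
    have h1 : Tendsto (fun t' : ℝ => min t t') (𝓝 t) (𝓝 t) := by
      have := (tendsto_const_nhds (x := t) (f := 𝓝 t)).min tendsto_id
      simpa using this
    exact (hcont.tendsto.comp h1).mono_left nhdsWithin_le_nhds
  have hψ : Tendsto (fun t' => g (max t t') - g (min t t'))
      (𝓝[Set.Icc S T \ {t}] t) (𝓝 0) := by
    have := ENNReal.Tendsto.sub hmax hmin (Or.inl hgt_ne)
    simpa [tsub_self] using this
  refine tendsto_of_tendsto_of_tendsto_of_le_of_le' tendsto_const_nhds hψ
    (Filter.Eventually.of_forall fun _ => zero_le) ?_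
  have hev1 : ∀ᶠ t' in 𝓝[Set.Icc S T \ {t}] t, |t' - t| < ε₀ := by
    have : ∀ᶠ t' in 𝓝 t, |t' - t| < ε₀ := by
      have := Metric.ball_mem_nhds t hε₀pos
      filter_upwards [this] with u hu
      rwa [Metric.mem_ball, Real.dist_eq] at hu
    exact this.filter_mono nhdsWithin_le_nhds
  filter_upwards [hev1, eventually_mem_nhdsWithin] with t' hdist ht'
  obtain ⟨ht'Icc, ht'ne⟩ := ht'
  have ht'ne' : t' ≠ t := ht'ne
  rcases lt_or_gt_of_ne ht'ne' with hlt | hgt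
  · -- t' < t
    have hb : Gap F xbar A δbar t' t ≤ f t - f t' :=
      boundLem ht'Icc.1 hlt (le_of_lt htT) (by rw [abs_sub_lt_iff] at hdist; linarith [hdist.2])
    have hsup : (⨆ x ∈ Metric.closedBall (xbar t) δbar, ⨆ a ∈ A,
        EMetric.hausdorffEdist (F t' x a) (F t x a)) ≤ Gap F xbar A δbar t' t := by
      refine iSup₂_le fun x hx => iSup₂_le fun a ha => ?_
      have hxmem : x ∈ xbar '' Set.Icc t' t + Metric.closedBall (0 : En n) δbar := by
        have h1 : xbar t ∈ xbar '' Set.Icc t' t := ⟨t, ⟨le_of_lt hlt, le_rfl⟩, rfl⟩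
        have h2 : x - xbar t ∈ Metric.closedBall (0 : En n) δbar := by
          rw [Metric.mem_closedBall, dist_zero_right]
          rw [Metric.mem_closedBall, dist_eq_norm] at hx
          exact hx
        have := Set.add_mem_add h1 h2
        simpa using this
      refine le_iSup₂_of_le x hxmem (le_iSup₂_of_le a ha ?_)
      exact (EMetric.hausdorffEdist_comm).le
    calc (⨆ x ∈ Metric.closedBall (xbar t) δbar, ⨆ a ∈ A,
          EMetric.hausdorffEdist (F t' x a) (F t x a))
        ≤ f t - f t' := hsup.trans hb
      _ = g (max t t') - g (min t t') := by
          rw [max_eq_left (le_of_lt hlt), min_eq_right (le_of_lt hlt),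
            hgeq t (le_of_lt htS) (le_of_lt htT), hgeq t' ht'Icc.1 ht'Icc.2]
  · -- t < t'
    have hb : Gap F xbar A δbar t t' ≤ f t' - f t :=
      boundLem (le_of_lt htS) hgt ht'Icc.2 (by rw [abs_sub_lt_iff] at hdist; linarith [hdist.1])
    have hsup : (⨆ x ∈ Metric.closedBall (xbar t) δbar, ⨆ a ∈ A,
        EMetric.hausdorffEdist (F t' x a) (F t x a)) ≤ Gap F xbar A δbar t t' := by
      refine iSup₂_le fun x hx => iSup₂_le fun a ha => ?_
      have hxmem : x ∈ xbar '' Set.Icc t t' + Metric.closedBall (0 : En n) δbar := by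
        have h1 : xbar t ∈ xbar '' Set.Icc t t' := ⟨t, ⟨le_rfl, le_of_lt hgt⟩, rfl⟩
        have h2 : x - xbar t ∈ Metric.closedBall (0 : En n) δbar := by
          rw [Metric.mem_closedBall, dist_zero_right]
          rw [Metric.mem_closedBall, dist_eq_norm] at hx
          exact hx
        have := Set.add_mem_add h1 h2
        simpa using this
      exact le_iSup₂_of_le x hxmem (le_iSup₂_of_le a ha le_rfl)
    calc (⨆ x ∈ Metric.closedBall (xbar t) δbar, ⨆ a ∈ A,
          EMetric.hausdorffEdist (F t' x a) (F t x a))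
        ≤ f t' - f t := hsup.trans hb
      _ = g (max t t') - g (min t t') := by
          rw [max_eq_right (le_of_lt hgt), min_eq_left (le_of_lt hgt),
            hgeq t (le_of_lt htS) (le_of_lt htT), hgeq t' ht'Icc.1 ht'Icc.2]


end
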